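/- Let ε and ε' be sign vectors that differ at exactly one index k, and let 1 ≤ i, j ≤ n with i ≠ j. If F^ε_{i,k} = F^{ε'}_{j,k} and this common face is nonempty, then either (j = i−1 and k = i) or (j = i+1 and k = i+1). -/

import Mathlib

noncomputable section

open Set

/-- The brick `Y^ε_i ⊆ S^n` (coordinate indices are 0-based, so the 1-based
condition `k ≤ i` becomes `(k : ℕ) < i`, and `k ≥ i+1` becomes `i ≤ (k : ℕ)`). -/
def Ybrick (n : ℕ) (ε : Fin (n + 1) → ℝ) (i : ℕ) : Set (EuclideanSpace ℝ (Fin (n + 1))) :=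
  {v | ‖v‖ = 1 ∧ (∀ k, 0 ≤ ε k * v k) ∧
    (∃ k : Fin (n + 1), (k : ℕ) < i ∧ v k ≠ 0) ∧
    (∃ k : Fin (n + 1), i ≤ (k : ℕ) ∧ v k ≠ 0)}

/-- The `j`-th face `F^ε_{i,j}` of `Y^ε_i`. -/
def Fface (n : ℕ) (ε : Fin (n + 1) → ℝ) (i : ℕ) (j : Fin (n + 1)) :
    Set (EuclideanSpace ℝ (Fin (n + 1))) :=
  {v ∈ Ybrick n ε i | v j = 0}

def wvec (n : ℕ) (ε : Fin (n + 1) → ℝ) (a b : Fin (n + 1)) :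
    EuclideanSpace ℝ (Fin (n + 1)) :=
  WithLp.toLp 2 (fun l => if l = a then ε a * (Real.sqrt 2)⁻¹ else if l = b then ε b * (Real.sqrt 2)⁻¹ else 0)

lemma wvec_norm (n : ℕ) (ε : Fin (n + 1) → ℝ) (hε : ∀ k, ε k = 1 ∨ ε k = -1)
    (a b : Fin (n + 1)) (hab : a ≠ b) : ‖wvec n ε a b‖ = 1 := by
  have h2 : ((Real.sqrt 2)⁻¹ : ℝ) ^ 2 = 1 / 2 := by
    rw [inv_pow, Real.sq_sqrt (by norm_num : (0:ℝ) ≤ 2)]; norm_num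
  have hsq : ∀ x, (ε x) ^ 2 = 1 := fun x => by rcases hε x with h | h <;> rw [h] <;> norm_num
  rw [EuclideanSpace.norm_eq]
  have hsum : ∑ l, ‖wvec n ε a b l‖ ^ 2 = 1 := by
    have key : ∀ l, ‖wvec n ε a b l‖ ^ 2 =
        (if l = a then (1:ℝ)/2 else 0) + (if l = b then (1:ℝ)/2 else 0) := by
      intro l
      unfold wvec; dsimp only
      rcases eq_or_ne l a with h | h
      · have hlb : l ≠ b := by rw [h]; exact hab
        rw [if_pos h, if_pos h, if_neg hlb, Real.norm_eq_abs, sq_abs, mul_pow,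
          hsq a, one_mul, h2]
        norm_num
      · rcases eq_or_ne l b with h' | h'
        · rw [if_neg h, if_neg h, if_pos h', if_pos h', Real.norm_eq_abs, sq_abs, mul_pow,
            hsq b, one_mul, h2]
          norm_num
        · simp [h, h']
    rw [Finset.sum_congr rfl (fun l _ => key l), Finset.sum_add_distrib]
    simp; norm_num
  rw [hsum, Real.sqrt_one]

lemma wvec_mem_face (n : ℕ) (ε ε'' : Fin (n + 1) → ℝ) (hε : ∀ k, ε k = 1 ∨ ε k = -1)
    (i : ℕ) (k a b : Fin (n + 1)) (hab : a ≠ b) (hak : a ≠ k) (hbk : b ≠ k)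
    (hea : ε'' a = ε a) (heb : ε'' b = ε b)
    (hai : (a : ℕ) < i) (hbi : i ≤ (b : ℕ)) :
    wvec n ε a b ∈ Fface n ε'' i k := by
  have hc : (0:ℝ) < (Real.sqrt 2)⁻¹ := by positivity
  have hsq : ∀ x, (ε x) ^ 2 = 1 := fun x => by rcases hε x with h | h <;> rw [h] <;> norm_num
  have hεne : ∀ x, ε x ≠ 0 := fun x => by rcases hε x with h | h <;> rw [h] <;> norm_num
  refine ⟨⟨wvec_norm n ε hε a b hab, ?_, ⟨a, hai, ?_⟩, ⟨b, hbi, ?_⟩⟩, ?_⟩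
  · intro l
    unfold wvec; dsimp only
    rcases eq_or_ne l a with h | h
    · rw [if_pos h, h, hea]
      have : ε a * (ε a * (Real.sqrt 2)⁻¹) = (ε a) ^ 2 * (Real.sqrt 2)⁻¹ := by ring
      rw [this, hsq a, one_mul]
      exact hc.le
    · rcases eq_or_ne l b with h' | h'
      · rw [if_neg h, if_pos h', h', heb]
        have : ε b * (ε b * (Real.sqrt 2)⁻¹) = (ε b) ^ 2 * (Real.sqrt 2)⁻¹ := by ring
        rw [this, hsq b, one_mul]
        exact hc.le
      · simp [h, h']
  · show (if a = a then ε a * (Real.sqrt 2)⁻¹ else _) ≠ 0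
    rw [if_pos rfl]
    exact mul_ne_zero (hεne a) (ne_of_gt hc)
  · show (if b = a then _ else if b = b then ε b * (Real.sqrt 2)⁻¹ else 0) ≠ 0
    rw [if_neg (Ne.symm hab), if_pos rfl]
    exact mul_ne_zero (hεne b) (ne_of_gt hc)
  · show (if k = a then _ else if k = b then _ else (0:ℝ)) = 0
    rw [if_neg (Ne.symm hak), if_neg (Ne.symm hbk)]

lemma wvec_support (n : ℕ) (ε : Fin (n + 1) → ℝ) (a b l : Fin (n + 1))
    (h : wvec n ε a b l ≠ 0) : l = a ∨ l = b := by
  by_contra hc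
  push_neg at hc
  exact h (by simp [wvec, hc.1, hc.2])

lemma key (n : ℕ) (ε ε' : Fin (n + 1) → ℝ) (hε : ∀ k, ε k = 1 ∨ ε k = -1)
    (k : Fin (n + 1))
    (i j : ℕ) (hjn : j ≤ n) (hlt : i < j)
    (heq : Fface n ε i k = Fface n ε' j k) (hne : (Fface n ε i k).Nonempty) :
    j = i + 1 ∧ (k : ℕ) = i := by
  obtain ⟨v, ⟨_, _, ⟨a, hai, hva⟩, _⟩, hvk⟩ := hne
  have hak : a ≠ k := fun h => hva (h ▸ hvk)
  by_cases hgoal : j = i + 1 ∧ (k : ℕ) = i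
  · exact hgoal
  exfalso
  have hbex : ∃ b : Fin (n + 1), i ≤ (b : ℕ) ∧ (b : ℕ) < j ∧ b ≠ k := by
    by_cases hk : (k : ℕ) = i
    · have hj2 : i + 1 < j := by
        rcases Nat.lt_or_ge (i + 1) j with h | h
        · exact h
        · exact absurd ⟨Nat.le_antisymm h hlt, hk⟩ hgoal
      refine ⟨⟨i + 1, by omega⟩, by simp, by simp [hj2], fun h => ?_⟩
      rw [← h] at hk
      exact Nat.succ_ne_self i (by simpa using hk)
    · exact ⟨⟨i, by omega⟩, by simp, by simp [hlt], fun h => hk (by rw [← h])⟩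
  obtain ⟨b, hib, hbj, hbk⟩ := hbex
  have hab : a ≠ b := fun h => by rw [h] at hai; omega
  have hw : wvec n ε a b ∈ Fface n ε i k :=
    wvec_mem_face n ε ε hε i k a b hab hak hbk rfl rfl hai hib
  rw [heq] at hw
  obtain ⟨⟨_, _, _, ⟨l, hjl, hwl⟩⟩, _⟩ := hw
  rcases wvec_support n ε a b l hwl with h | h <;> rw [h] at hjl <;> omega

/-- If `ε` and `ε'` differ exactly at the coordinate of 0-based index `k`,
`1 ≤ i, j ≤ n`, `i ≠ j`, and `F^ε_{i,k} = F^{ε'}_{j,k}` is nonempty, then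
either `j = i - 1` and `k` is the `i`-th coordinate (i.e. `(k : ℕ) + 1 = i`),
or `j = i + 1` and `k` is the `(i+1)`-st coordinate (i.e. `(k : ℕ) + 1 = i + 1`). -/
theorem face_match_cases (n : ℕ) (hn : 1 ≤ n)
    (ε ε' : Fin (n + 1) → ℝ) (hε : ∀ k, ε k = 1 ∨ ε k = -1)
    (hε' : ∀ k, ε' k = 1 ∨ ε' k = -1) (k : Fin (n + 1))
    (hflip : ε' k = -ε k) (hagree : ∀ l : Fin (n + 1), l ≠ k → ε' l = ε l)
    (i j : ℕ) (hi1 : 1 ≤ i) (hin : i ≤ n) (hj1 : 1 ≤ j) (hjn : j ≤ n) (hij : i ≠ j)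
    (heq : Fface n ε i k = Fface n ε' j k) (hne : (Fface n ε i k).Nonempty) :
    (j = i - 1 ∧ (k : ℕ) + 1 = i) ∨ (j = i + 1 ∧ (k : ℕ) + 1 = i + 1) := by
  rcases Nat.lt_or_ge i j with h | h
  · obtain ⟨h1, h2⟩ := key n ε ε' hε k i j hjn h heq hne
    right; exact ⟨h1, by omega⟩
  · have hlt : j < i := lt_of_le_of_ne h (Ne.symm hij)
    obtain ⟨h1, h2⟩ := key n ε' ε hε' k j i hin hlt heq.symm (heq ▸ hne)
    left; exact ⟨by omega, by omega⟩
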